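/- Let x be a solution of the Riccati equation D x' = A + B x + C x² over a differential field, let a be an element with derivative a' and β ≠ 0 a constant, and set y = 1/(βx − a). Then y satisfies the Riccati equation D̃ y' = Ã + B̃ y + C̃ y² where à = −C, B̃ = −βB − 2aC, C̃ = −β²A − βaB − a²C + βa'D, and D̃ = βD. -/

import Mathlib

/-- Let `x` be a solution of the Riccati equation `D x' = A + B x + C x²` over a
differential field, let `a` be an element with derivative `a' = d a` and `β ≠ 0`
a constant (i.e. `d β = 0`), and set `y = 1/(βx − a)`. Then `y` satisfies the Riccati
equation `D̃ y' = Ã + B̃ y + C̃ y²` where `Ã = −C`, `B̃ = −βB − 2aC`,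
`C̃ = −β²A − βaB − a²C + βa'D`, and `D̃ = βD`. -/
theorem riccati_transform {K : Type*} [Field K] [Algebra ℚ K]
    (d : Derivation ℚ K K) (A B C D a β x y : K)
    (hβ : β ≠ 0) (hβconst : d β = 0)
    (hden : β * x - a ≠ 0) (hy : y = (β * x - a)⁻¹)
    (hx : D * d x = A + B * x + C * x ^ 2) :
    (β * D) * d y =
      (-C) + (-(β * B) - 2 * a * C) * y +
        (-(β ^ 2 * A) - β * a * B - a ^ 2 * C + β * d a * D) * y ^ 2 := by
  subst hy
  rw [Derivation.leibniz_inv]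
  have hd : d (β * x - a) = β * d x - d a := by
    rw [map_sub, Derivation.leibniz, hβconst]
    simp [smul_eq_mul]
  rw [hd, smul_eq_mul]
  field_simp
  linear_combination (-(β^2)) * hx
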